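/- If μ is an eigenvalue of a real symmetric n×n matrix A partitioned as [[A_S, Bᵀ],[B, C]] where S indexes the first k rows, then S is a star set for μ (i.e., the projections of the coordinate vectors indexed by S onto the μ-eigenspace form a basis of that eigenspace) if and only if μ is not an eigenvalue of C and μI − A_S = Bᵀ(μI − C)⁻¹B. -/

import Mathlib

open Matrix

theorem reconstruction_theorem {k t : ℕ}
    (AS : Matrix (Fin k) (Fin k) ℝ) (B : Matrix (Fin t) (Fin k) ℝ)
    (C : Matrix (Fin t) (Fin t) ℝ)
    (A : Matrix (Fin k ⊕ Fin t) (Fin k ⊕ Fin t) ℝ)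
    (hA : A = Matrix.fromBlocks AS Bᵀ B C)
    (hsymm : A.IsSymm)
    (hentries : ∀ p q, A p q ∈ ({0, 1, -1} : Set ℝ))
    (hdiag : ∀ p, A p p = 0)
    (μ : ℝ)
    (hμ : ∃ v : (Fin k ⊕ Fin t) → ℝ, v ≠ 0 ∧ A.mulVec v = μ • v)
    (K : Submodule ℝ (EuclideanSpace ℝ (Fin k ⊕ Fin t)))
    (hK : ∀ v : EuclideanSpace ℝ (Fin k ⊕ Fin t), v ∈ K ↔ A.mulVec v = μ • v) :
    (∃ p : Fin k → EuclideanSpace ℝ (Fin k ⊕ Fin t),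
        (∀ u, p u ∈ K ∧ EuclideanSpace.single (Sum.inl u) (1 : ℝ) - p u ∈ Kᗮ) ∧
        LinearIndependent ℝ p ∧ Submodule.span ℝ (Set.range p) = K)
      ↔
    ((¬ ∃ w : Fin t → ℝ, w ≠ 0 ∧ C.mulVec w = μ • w) ∧
      μ • (1 : Matrix (Fin k) (Fin k) ℝ) - AS =
        Bᵀ * (μ • (1 : Matrix (Fin t) (Fin t) ℝ) - C)⁻¹ * B) := by
  classical
  set E := EuclideanSpace ℝ (Fin k ⊕ Fin t)
  set M : Matrix (Fin k ⊕ Fin t) (Fin k ⊕ Fin t) ℝ := μ • 1 - A with hMdef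
  set D : Matrix (Fin t) (Fin t) ℝ := μ • 1 - C with hDdef
  have hM : M = Matrix.fromBlocks (μ • 1 - AS) (-Bᵀ) (-B) D := by
    rw [hMdef, hA, hDdef]
    ext i j
    cases i <;> cases j <;>
      simp [Matrix.one_apply, Matrix.sub_apply, Matrix.smul_apply, Matrix.fromBlocks]
  have hMsymm : Mᵀ = M := by
    rw [hMdef, Matrix.transpose_sub, Matrix.transpose_smul, Matrix.transpose_one, hsymm.eq]
  have hKmem : ∀ v : E, v ∈ K ↔ M *ᵥ v = 0 := by
    intro v
    rw [hK, hMdef, Matrix.sub_mulVec, Matrix.smul_mulVec, Matrix.one_mulVec,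
      sub_eq_zero, eq_comm]
  -- M maps everything into Kᗮ
  have hMK : ∀ z : (Fin k ⊕ Fin t) → ℝ, (WithLp.toLp 2 (M *ᵥ z) : E) ∈ Kᗮ := by
    intro z
    rw [Submodule.mem_orthogonal]
    intro u hu
    have hu0 : M *ᵥ u = 0 := (hKmem u).1 hu
    have : (inner ℝ u (WithLp.toLp 2 (M *ᵥ z) : E) : ℝ) = u ⬝ᵥ (M *ᵥ z) := by
      rw [PiLp.inner_apply]
      simp [dotProduct, RCLike.inner_apply, mul_comm]
    rw [this, Matrix.dotProduct_mulVec, ← Matrix.mulVec_transpose, hMsymm, hu0,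
      zero_dotProduct]
  -- inner of single with K elements
  have hinner_single : ∀ (i : Fin k ⊕ Fin t) (v : E),
      (inner ℝ (EuclideanSpace.single i (1:ℝ)) v : ℝ) = v i := by
    intro i v
    rw [EuclideanSpace.inner_single_left]
    simp
  -- the coordinate restriction linear map
  let φ : E →ₗ[ℝ] (Fin k → ℝ) :=
    { toFun := fun v u => v (Sum.inl u)
      map_add' := fun x y => rfl
      map_smul' := fun c x => rfl }
  have hDeq : ∀ w : Fin t → ℝ, C *ᵥ w = μ • w ↔ D *ᵥ w = 0 := by
    intro w
    rw [hDdef, Matrix.sub_mulVec, Matrix.smul_mulVec, Matrix.one_mulVec,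
      sub_eq_zero, eq_comm]
  constructor
  · rintro ⟨p, hp, hli, hspan⟩
    -- no eigenvector of A vanishing on S
    have hzero : ∀ v : E, v ∈ K → (∀ u, v (Sum.inl u) = 0) → v = 0 := by
      intro v hv h0
      have hvo : v ∈ Kᗮ := by
        rw [← hspan, Submodule.mem_orthogonal]
        intro w hw
        induction hw using Submodule.span_induction with
        | mem w hw =>
          obtain ⟨u, rfl⟩ := hw
          have h1 : (inner ℝ (EuclideanSpace.single (Sum.inl u) (1:ℝ) - p u) v : ℝ) = 0 := by
            rw [real_inner_comm]
            exact (Submodule.mem_orthogonal _ _).1 ((hp u).2) v hv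
          have h2 : (inner ℝ (EuclideanSpace.single (Sum.inl u) (1:ℝ)) v : ℝ) = 0 := by
            rw [hinner_single]; exact h0 u
          have := inner_sub_left (𝕜 := ℝ) (EuclideanSpace.single (Sum.inl u) (1:ℝ)) (p u) v
          rw [h1, h2] at this
          linarith
        | zero => simp
        | add x y _ _ hx hy => rw [inner_add_left, hx, hy]; ring
        | smul c x _ hx => rw [inner_smul_left, hx]; simp
      have : (inner ℝ v v : ℝ) = 0 := (Submodule.mem_orthogonal _ _).1 hvo v hv
      exact inner_self_eq_zero.1 this
    -- nothing supported on S lies in Kᗮ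
    have hWperp : ∀ w : E, w ∈ Kᗮ → (∀ j, w (Sum.inr j) = 0) → w = 0 := by
      intro w hw h0
      have hwsum : w = ∑ u, w (Sum.inl u) • EuclideanSpace.single (Sum.inl u) (1:ℝ) := by
        ext i
        have : w i = ∑ u, (w (Sum.inl u) • EuclideanSpace.single (Sum.inl u) (1:ℝ)) i := by
          cases i with
          | inl u => simp [EuclideanSpace.single_apply, PiLp.smul_apply]
          | inr j => simp [EuclideanSpace.single_apply, PiLp.smul_apply, h0 j]
        rw [this, WithLp.ofLp_sum]
        exact (Finset.sum_apply i Finset.univ _).symm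
      set c : Fin k → ℝ := fun u => w (Sum.inl u) with hc
      have hsum_p : (∑ u, c u • p u) = 0 := by
        have h1 : (∑ u, c u • p u) ∈ K :=
          Submodule.sum_mem _ (fun u _ => Submodule.smul_mem _ _ (hp u).1)
        have h2 : (∑ u, c u • p u) ∈ Kᗮ := by
          have heq : (∑ u, c u • p u)
              = w - ∑ u, c u • (EuclideanSpace.single (Sum.inl u) (1:ℝ) - p u) := by
            rw [hwsum]
            rw [← Finset.sum_sub_distrib]
            congr 1
            funext u
            rw [smul_sub]
            abel
          rw [heq]
          exact Submodule.sub_mem _ hw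
            (Submodule.sum_mem _ (fun u _ => Submodule.smul_mem _ _ (hp u).2))
        have : (inner ℝ (∑ u, c u • p u) (∑ u, c u • p u) : ℝ) =
            0 := (Submodule.mem_orthogonal _ _).1 h2 _ h1
        exact inner_self_eq_zero.1 this
      have hc0 : ∀ u, c u = 0 := Fintype.linearIndependent_iff.1 hli c hsum_p
      rw [hwsum]
      apply Finset.sum_eq_zero
      intro u _
      rw [show w (Sum.inl u) = 0 from hc0 u, zero_smul]
    -- D is injective
    have hDinj : ∀ y : Fin t → ℝ, D *ᵥ y = 0 → y = 0 := by
      intro y hy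
      set z : (Fin k ⊕ Fin t) → ℝ := Sum.elim 0 y with hz
      have hMz : M *ᵥ z = Sum.elim (-(Bᵀ *ᵥ y)) 0 := by
        rw [hM, Matrix.fromBlocks_mulVec]
        have h1 : z ∘ Sum.inl = 0 := rfl
        have h2 : z ∘ Sum.inr = y := rfl
        rw [h1, h2, hy]
        simp [Matrix.neg_mulVec]
      have hw := hMK z
      have hMz0 : (WithLp.toLp 2 (M *ᵥ z) : E) = 0 := by
        apply hWperp _ hw
        intro j
        show (M *ᵥ z) (Sum.inr j) = 0
        rw [hMz]
        rfl
      have hzK : (WithLp.toLp 2 z : E) ∈ K := (hKmem _).2 (congrArg WithLp.ofLp hMz0)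
      have hz0 : (WithLp.toLp 2 z : E) = 0 := hzero _ hzK (fun u => rfl)
      funext j
      exact congrFun (congrArg WithLp.ofLp hz0) (Sum.inr j)
    have hDdet : IsUnit D.det := by
      rw [isUnit_iff_ne_zero]
      intro h
      obtain ⟨y, hy0, hy⟩ := Matrix.exists_mulVec_eq_zero_iff.2 h
      exact hy0 (hDinj y hy)
    refine ⟨?_, ?_⟩
    · rintro ⟨w, hw0, hwC⟩
      exact hw0 (hDinj w ((hDeq w).1 hwC))
    · -- surjectivity of coordinate restriction
      have hsurj : ∀ x : Fin k → ℝ, ∃ v : E, v ∈ K ∧ ∀ u, v (Sum.inl u) = x u := by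
        intro x
        have hφli : LinearIndependent ℝ (fun u => φ (p u)) := by
          rw [Fintype.linearIndependent_iff]
          intro g hg
          have : φ (∑ u, g u • p u) = 0 := by
            rw [map_sum]
            simp only [_root_.map_smul]
            exact hg
          have hv0 : (∑ u, g u • p u) = 0 := by
            apply hzero _ (Submodule.sum_mem _ (fun u _ => Submodule.smul_mem _ _ (hp u).1))
            intro u
            exact congrFun this u
          exact Fintype.linearIndependent_iff.1 hli g hv0
        have hspanφ : Submodule.span ℝ (Set.range (fun u => φ (p u))) = ⊤ := by
          apply Submodule.eq_top_of_finrank_eq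
          rw [finrank_span_eq_card hφli]
          simp
        have hmap : Submodule.map φ K = ⊤ := by
          rw [← hspan, Submodule.map_span, ← Set.range_comp]
          exact hspanφ
        have hx : x ∈ Submodule.map φ K := by rw [hmap]; trivial
        obtain ⟨v, hvK, hvx⟩ := hx
        exact ⟨v, hvK, fun u => congrFun hvx u⟩
      have hkey : ∀ x : Fin k → ℝ,
          (μ • (1 : Matrix (Fin k) (Fin k) ℝ) - AS) *ᵥ x = (Bᵀ * D⁻¹ * B) *ᵥ x := by
        intro x
        obtain ⟨v, hvK, hvx⟩ := hsurj x
        have hv0 : M *ᵥ v = 0 := (hKmem v).1 hvK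
        rw [hM, Matrix.fromBlocks_mulVec] at hv0
        have h1 : v ∘ Sum.inl = x := funext hvx
        rw [h1] at hv0
        set y : Fin t → ℝ := v ∘ Sum.inr with hy
        have htop : (μ • (1 : Matrix (Fin k) (Fin k) ℝ) - AS) *ᵥ x + (-Bᵀ) *ᵥ y = 0 :=
          funext fun u => congrFun hv0 (Sum.inl u)
        have hbot : (-B) *ᵥ x + D *ᵥ y = 0 :=
          funext fun j => congrFun hv0 (Sum.inr j)
        have hDy : D *ᵥ y = B *ᵥ x := by
          funext j
          have h := congrFun hbot j
          rw [Matrix.neg_mulVec] at h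
          have h' : -((B *ᵥ x) j) + (D *ᵥ y) j = 0 := h
          linarith
        have hyx : y = D⁻¹ *ᵥ (B *ᵥ x) := by
          rw [← hDy, Matrix.mulVec_mulVec, Matrix.nonsing_inv_mul _ hDdet, Matrix.one_mulVec]
        have htop' : (μ • (1 : Matrix (Fin k) (Fin k) ℝ) - AS) *ᵥ x = Bᵀ *ᵥ y := by
          funext u
          have h := congrFun htop u
          rw [Matrix.neg_mulVec] at h
          have h' : ((μ • (1 : Matrix (Fin k) (Fin k) ℝ) - AS) *ᵥ x) u + -((Bᵀ *ᵥ y) u) = 0 := h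
          linarith
        rw [htop', hyx, Matrix.mulVec_mulVec, Matrix.mulVec_mulVec, Matrix.mul_assoc]
      ext i j
      have := congrFun (hkey (Pi.single j 1)) i
      rw [Matrix.mulVec_single, Matrix.mulVec_single] at this
      simpa using this
  · rintro ⟨hnoeig, hrec⟩
    have hDdet : IsUnit D.det := by
      rw [isUnit_iff_ne_zero]
      intro h
      obtain ⟨y, hy0, hy⟩ := Matrix.exists_mulVec_eq_zero_iff.2 h
      exact hnoeig ⟨y, hy0, (hDeq y).2 hy⟩
    set g : (Fin k → ℝ) → E := fun x => WithLp.toLp 2 (Sum.elim x (D⁻¹ *ᵥ (B *ᵥ x))) with hg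
    have hgK : ∀ x, g x ∈ K := by
      intro x
      rw [hKmem, hM]
      show Matrix.fromBlocks (μ • 1 - AS) (-Bᵀ) (-B) D *ᵥ Sum.elim x (D⁻¹ *ᵥ (B *ᵥ x)) = 0
      rw [Matrix.fromBlocks_mulVec]
      have h1 : Sum.elim x (D⁻¹ *ᵥ (B *ᵥ x)) ∘ Sum.inl = x := rfl
      have h2 : Sum.elim x (D⁻¹ *ᵥ (B *ᵥ x)) ∘ Sum.inr = D⁻¹ *ᵥ (B *ᵥ x) := rfl
      rw [h1, h2]
      have htop : (μ • 1 - AS) *ᵥ x + (-Bᵀ) *ᵥ (D⁻¹ *ᵥ (B *ᵥ x)) = 0 := by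
        rw [hrec, Matrix.neg_mulVec, Matrix.mulVec_mulVec, Matrix.mulVec_mulVec]
        exact add_neg_cancel _
      have hbot : (-B) *ᵥ x + D *ᵥ (D⁻¹ *ᵥ (B *ᵥ x)) = 0 := by
        rw [Matrix.neg_mulVec, Matrix.mulVec_mulVec, Matrix.mul_nonsing_inv _ hDdet,
          Matrix.one_mulVec]
        exact neg_add_cancel _
      rw [htop, hbot]
      funext i
      cases i <;> rfl
    have hDinj : ∀ y : Fin t → ℝ, D *ᵥ y = 0 → y = 0 := by
      intro y hy
      have : D⁻¹ *ᵥ (D *ᵥ y) = y := by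
        rw [Matrix.mulVec_mulVec, Matrix.nonsing_inv_mul _ hDdet, Matrix.one_mulVec]
      rw [← this, hy, Matrix.mulVec_zero]
    have hKchar : ∀ v : E, v ∈ K → φ v = 0 → v = 0 := by
      intro v hv hφ0
      have hv0 : M *ᵥ v = 0 := (hKmem v).1 hv
      rw [hM, Matrix.fromBlocks_mulVec] at hv0
      have h1 : v ∘ Sum.inl = (0 : Fin k → ℝ) := hφ0
      rw [h1] at hv0
      have hbot : (-B) *ᵥ (0 : Fin k → ℝ) + D *ᵥ (v ∘ Sum.inr) = 0 :=
        funext fun j => congrFun hv0 (Sum.inr j)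
      rw [Matrix.mulVec_zero, zero_add] at hbot
      have h2 : v ∘ Sum.inr = 0 := hDinj _ hbot
      ext i
      cases i with
      | inl u => exact congrFun h1 u
      | inr j => exact congrFun h2 j
    -- finrank K = k
    let φK : K →ₗ[ℝ] (Fin k → ℝ) := φ.comp K.subtype
    have hinj : Function.Injective φK := by
      rw [← LinearMap.ker_eq_bot, LinearMap.ker_eq_bot']
      intro m hm0
      exact Subtype.ext (hKchar m.1 m.2 hm0)
    have hsurjK : Function.Surjective φK := by
      intro x
      exact ⟨⟨g x, hgK x⟩, rfl⟩
    have hfin : Module.finrank ℝ K = k := by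
      rw [(LinearEquiv.ofBijective φK ⟨hinj, hsurjK⟩).finrank_eq]
      simp
    -- define p as orthogonal projections
    set p : Fin k → E := fun u =>
      (K.orthogonalProjectionOnto (EuclideanSpace.single (Sum.inl u) (1:ℝ)) : E) with hpdef
    have hpK : ∀ u, p u ∈ K := fun u => (K.orthogonalProjectionOnto _).2
    have hpperp : ∀ u, EuclideanSpace.single (Sum.inl u) (1:ℝ) - p u ∈ Kᗮ :=
      fun u => by
        have := K.sub_starProjection_mem_orthogonal (EuclideanSpace.single (Sum.inl u) (1:ℝ))
        rwa [Submodule.starProjection_apply] at this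
    have hinner_p : ∀ (u : Fin k) (v : E), v ∈ K → (inner ℝ (p u) v : ℝ) = v (Sum.inl u) := by
      intro u v hv
      have h1 : (inner ℝ (EuclideanSpace.single (Sum.inl u) (1:ℝ) - p u) v : ℝ) = 0 := by
        rw [real_inner_comm]
        exact (Submodule.mem_orthogonal _ _).1 (hpperp u) v hv
      rw [inner_sub_left, hinner_single] at h1
      linarith
    have hli : LinearIndependent ℝ p := by
      rw [Fintype.linearIndependent_iff]
      intro c hc
      have hvK : g c ∈ K := hgK c
      have h0 : (inner ℝ (∑ u, c u • p u) (g c) : ℝ) = 0 := by rw [hc]; simp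
      rw [sum_inner] at h0
      have heval : ∀ u, (inner ℝ (c u • p u) (g c) : ℝ) = c u * c u := by
        intro u
        rw [real_inner_smul_left, hinner_p u _ hvK]
        rfl
      rw [Finset.sum_congr rfl (fun u _ => heval u)] at h0
      intro i
      have : ∀ u ∈ Finset.univ, (0:ℝ) ≤ c u * c u := fun u _ => mul_self_nonneg _
      have := (Finset.sum_eq_zero_iff_of_nonneg this).1 h0 i (Finset.mem_univ i)
      exact mul_self_eq_zero.1 this
    refine ⟨p, fun u => ⟨hpK u, hpperp u⟩, hli, ?_⟩
    apply Submodule.eq_of_le_of_finrank_le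
    · rw [Submodule.span_le]
      rintro _ ⟨u, rfl⟩
      exact hpK u
    · rw [hfin, finrank_span_eq_card hli, Fintype.card_fin]
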